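/- Let k ≥ 0 be an integer, T ⊂ ℝ² a bounded open set with x_T ∈ T. Then the space of ℝ²-valued polynomials of total degree ≤ k on T admits the direct sum decomposition ℙ^k(T; ℝ²) = rot ℙ^{k+1}(T) ⊕ (x − x_T)ℙ^{k−1}(T), where rot w = (∂₂w, −∂₁w) and ℙ^{−1}(T) = {0}. -/

import Mathlib

open MvPolynomial

noncomputable section
namespace Stmt8Aux
open Finset

abbrev P2 := MvPolynomial (Fin 2) ℝ

lemma degree_eq_sum (d : Fin 2 →₀ ℕ) : d.degree = d 0 + d 1 := by
  rw [Finsupp.degree_apply, Finset.sum_subset (Finset.subset_univ d.support)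
    (fun x _ hx => Finsupp.notMem_support_iff.mp hx), Fin.sum_univ_two]

lemma degree_sub_single {i : Fin 2} {d : Fin 2 →₀ ℕ} (h : 0 < d i) :
    (d - Finsupp.single i 1).degree + 1 = d.degree := by
  rw [degree_eq_sum, degree_eq_sum]
  have e0 : (d - Finsupp.single i 1 : Fin 2 →₀ ℕ) 0 = d 0 - Finsupp.single i 1 0 :=
    Finsupp.tsub_apply _ _ _
  have e1 : (d - Finsupp.single i 1 : Fin 2 →₀ ℕ) 1 = d 1 - Finsupp.single i 1 1 :=
    Finsupp.tsub_apply _ _ _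
  fin_cases i <;> simp only [Finsupp.single_apply] at * <;> simp at * <;> omega

lemma X_mul_pderiv_monomial (i : Fin 2) (d : Fin 2 →₀ ℕ) (c : ℝ) :
    X i * pderiv i (monomial d c) = (monomial d (c * d i) : P2) := by
  rw [pderiv_monomial]
  rcases Nat.eq_zero_or_pos (d i) with h | h
  · simp [h]
  · rw [X, monomial_mul, one_mul, add_tsub_cancel_of_le (Finsupp.single_le_iff.mpr h)]

lemma euler {p : P2} {n : ℕ} (hp : p.IsHomogeneous n) :
    X 0 * pderiv 0 p + X 1 * pderiv 1 p = n • p := by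
  conv_lhs => rw [p.as_sum]
  rw [map_sum, map_sum, Finset.mul_sum, Finset.mul_sum, ← Finset.sum_add_distrib]
  conv_rhs => rw [p.as_sum, Finset.smul_sum]
  refine Finset.sum_congr rfl fun d hd => ?_
  rw [X_mul_pderiv_monomial, X_mul_pderiv_monomial, ← map_add, ← mul_add, ← Nat.cast_add,
    ← degree_eq_sum, show d.degree = n from by
      simpa [Finsupp.degree_eq_weight_one, Pi.one_def] using hp (mem_support_iff.mp hd),
    smul_monomial, nsmul_eq_mul, mul_comm]

lemma pderiv_isHomogeneous {p : P2} {n : ℕ} (hp : p.IsHomogeneous n) (i : Fin 2) :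
    (pderiv i p).IsHomogeneous (n - 1) := by
  conv => rw [p.as_sum]
  rw [map_sum]
  apply IsHomogeneous.sum
  intro d hd
  rw [pderiv_monomial]
  rcases Nat.eq_zero_or_pos (d i) with h | h
  · simp only [h, Nat.cast_zero, mul_zero, map_zero]
    exact isHomogeneous_zero _ _ _
  · apply isHomogeneous_monomial
    have hdn : d.degree = n := by
      simpa [Finsupp.degree_eq_weight_one, Pi.one_def] using hp (mem_support_iff.mp hd)
    have h2 := degree_sub_single h
    omega

lemma X_mul_pderiv_isHomogeneous {p : P2} {n : ℕ} (hp : p.IsHomogeneous n) (i : Fin 2) :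
    (X i * pderiv i p).IsHomogeneous n := by
  conv => rw [p.as_sum]
  rw [map_sum, Finset.mul_sum]
  apply IsHomogeneous.sum
  intro d hd
  rw [X_mul_pderiv_monomial]
  exact isHomogeneous_monomial _ (by
    simpa [Finsupp.degree_eq_weight_one, Pi.one_def] using hp (mem_support_iff.mp hd))

lemma totalDegree_pderiv_le (p : P2) (i : Fin 2) :
    (pderiv i p).totalDegree ≤ p.totalDegree - 1 := by
  conv_lhs => rw [p.as_sum]
  rw [map_sum]
  apply totalDegree_finsetSum_le
  intro d hd
  rw [pderiv_monomial]
  rcases Nat.eq_zero_or_pos (d i) with h | h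
  · simp [h]
  · refine (totalDegree_monomial_le _ _).trans ?_
    have hdeg := degree_sub_single h
    have hle : d.degree ≤ p.totalDegree := le_totalDegree hd
    have : ((d - Finsupp.single i 1).sum fun _ => id) = (d - Finsupp.single i 1).degree := rfl
    omega

lemma pderiv_comm' (p : P2) : pderiv 0 (pderiv 1 p) = pderiv 1 (pderiv 0 p) := by
  conv_lhs => rw [p.as_sum]
  conv_rhs => rw [p.as_sum]
  rw [map_sum, map_sum, map_sum, map_sum]
  refine Finset.sum_congr rfl fun d _ => ?_
  simp only [pderiv_monomial]
  have h01 : (d - Finsupp.single 1 1 : Fin 2 →₀ ℕ) 0 = d 0 := by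
    rw [Finsupp.tsub_apply, Finsupp.single_apply]; simp
  have h10 : (d - Finsupp.single 0 1 : Fin 2 →₀ ℕ) 1 = d 1 := by
    rw [Finsupp.tsub_apply, Finsupp.single_apply]; simp
  rw [h01, h10, tsub_tsub, tsub_tsub, add_comm (Finsupp.single 1 1)]
  ring_nf

lemma isHomogeneous_zero_eq_C {p : P2} (hp : p.IsHomogeneous 0) : p = C (coeff 0 p) := by
  have := homogeneousComponent_of_mem (mem_homogeneousSubmodule 0 p |>.mpr hp) (m := 0)
  rw [if_pos rfl] at this
  conv_lhs => rw [← this]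
  rw [homogeneousComponent_zero]

lemma core (m : ℕ) (a b : P2) (ha : a.IsHomogeneous m) (hb : b.IsHomogeneous m) :
    ∃ w q : P2, w.IsHomogeneous (m + 1) ∧ q.IsHomogeneous (m - 1) ∧ (m = 0 → q = 0) ∧
      a = pderiv 1 w + X 0 * q ∧ b = -pderiv 0 w + X 1 * q := by
  cases m with
  | zero =>
    refine ⟨X 1 * a - X 0 * b, 0, ?_, isHomogeneous_zero _ _ _, fun _ => rfl, ?_, ?_⟩
    · exact (((isHomogeneous_X _ _).mul ha).sub ((isHomogeneous_X _ _).mul hb))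
    · have ha' := isHomogeneous_zero_eq_C ha
      have hb' := isHomogeneous_zero_eq_C hb
      rw [map_sub, pderiv_mul, pderiv_mul]
      rw [ha', hb']
      simp [pderiv_C]
    · have ha' := isHomogeneous_zero_eq_C ha
      have hb' := isHomogeneous_zero_eq_C hb
      rw [map_sub, pderiv_mul, pderiv_mul]
      rw [ha', hb']
      simp [pderiv_C]
  | succ m =>
    set μ : ℝ := ((m + 2 : ℕ) : ℝ)
    have hμ : μ ≠ 0 := by positivity
    set dv : P2 := pderiv 0 a + pderiv 1 b with hdv
    have hdvh : dv.IsHomogeneous m := by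
      simpa using (pderiv_isHomogeneous ha 0).add (pderiv_isHomogeneous hb 1)
    set q : P2 := μ⁻¹ • dv with hqdef
    have hq : q.IsHomogeneous m := by
      rw [hqdef, ← C_mul' ]
      exact hdvh.C_mul _
    set u0 : P2 := a - X 0 * q with hu0def
    set u1 : P2 := b - X 1 * q with hu1def
    have hu0 : u0.IsHomogeneous (m + 1) := by
      refine ha.sub ?_
      simpa [add_comm] using (isHomogeneous_X ℝ (0 : Fin 2)).mul hq
    have hu1 : u1.IsHomogeneous (m + 1) := by
      refine hb.sub ?_
      simpa [add_comm] using (isHomogeneous_X ℝ (1 : Fin 2)).mul hq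
    have hdiv : pderiv 0 u0 + pderiv 1 u1 = 0 := by
      have h1 : pderiv 0 u0 = pderiv 0 a - (q + X 0 * pderiv 0 q) := by
        rw [hu0def, map_sub, pderiv_mul, pderiv_X_self, one_mul]
      have h2 : pderiv 1 u1 = pderiv 1 b - (q + X 1 * pderiv 1 q) := by
        rw [hu1def, map_sub, pderiv_mul, pderiv_X_self, one_mul]
      have he : X 0 * pderiv 0 q + X 1 * pderiv 1 q = m • q := euler hq
      have hsmul : (m + 2 : ℕ) • q = dv := by
        rw [hqdef, ← Nat.cast_smul_eq_nsmul ℝ, smul_smul, mul_inv_cancel₀ hμ, one_smul]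
      calc pderiv 0 u0 + pderiv 1 u1
          = dv - ((2 : ℕ) • q + (X 0 * pderiv 0 q + X 1 * pderiv 1 q)) := by
            rw [h1, h2, hdv]; push_cast [two_smul]; ring
        _ = dv - (m + 2 : ℕ) • q := by rw [he, ← add_smul]; ring_nf
        _ = 0 := by rw [hsmul, sub_self]
    refine ⟨μ⁻¹ • (X 1 * u0 - X 0 * u1), q, ?_, ?_, by omega, ?_, ?_⟩
    · rw [← C_mul']
      refine IsHomogeneous.C_mul ?_ _
      have hA : (X 1 * u0 : P2).IsHomogeneous (m + 2) :=
        (show 1 + (m + 1) = m + 2 by ring) ▸ (isHomogeneous_X ℝ (1 : Fin 2)).mul hu0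
      have hB : (X 0 * u1 : P2).IsHomogeneous (m + 2) :=
        (show 1 + (m + 1) = m + 2 by ring) ▸ (isHomogeneous_X ℝ (0 : Fin 2)).mul hu1
      exact hA.sub hB
    · simpa using hq
    · -- a = pderiv 1 w + X 0 * q
      have hd1 : pderiv 1 ((μ⁻¹ : ℝ) • (X 1 * u0 - X 0 * u1)) = u0 := by
        rw [Derivation.map_smul, map_sub, pderiv_mul, pderiv_mul, pderiv_X_self, pderiv_X_of_ne (by decide)]
        have e1 : pderiv 1 u1 = - pderiv 0 u0 := by linear_combination (hdiv)
        have he : X 0 * pderiv 0 u0 + X 1 * pderiv 1 u0 = (m + 1) • u0 := euler hu0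
        have : (1 : P2) * u0 + X 1 * pderiv 1 u0 - (0 * u1 + X 0 * pderiv 1 u1) = μ • u0 := by
          rw [e1]
          have : μ • u0 = ((m + 2 : ℕ) : ℝ) • u0 := rfl
          rw [this, Nat.cast_smul_eq_nsmul]
          have hmsucc : (m + 2) • u0 = (m+1) • u0 + u0 := by rw [succ_nsmul]
          rw [hmsucc, ← he]
          ring
        rw [this, smul_smul, inv_mul_cancel₀ hμ, one_smul]
      rw [hd1, hu0def]; ring
    · have hd0 : pderiv 0 ((μ⁻¹ : ℝ) • (X 1 * u0 - X 0 * u1)) = -u1 := by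
        rw [Derivation.map_smul, map_sub, pderiv_mul, pderiv_mul, pderiv_X_self, pderiv_X_of_ne (by decide)]
        have e0 : pderiv 0 u0 = - pderiv 1 u1 := by linear_combination (hdiv)
        have he : X 0 * pderiv 0 u1 + X 1 * pderiv 1 u1 = (m + 1) • u1 := euler hu1
        have : (0 : P2) * u0 + X 1 * pderiv 0 u0 - (1 * u1 + X 0 * pderiv 0 u1) = μ • (-u1) := by
          rw [e0]
          have : μ • (-u1) = ((m + 2 : ℕ) : ℝ) • (-u1) := rfl
          rw [this, Nat.cast_smul_eq_nsmul]
          have hmsucc : (m + 2) • (-u1 : P2) = -((m+1) • u1) - u1 := by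
            rw [succ_nsmul]; push_cast [smul_neg]; ring_nf
          rw [hmsucc, ← he]
          ring
        rw [this, smul_smul, inv_mul_cancel₀ hμ, one_smul]
      rw [hd0, hu1def]; ring

lemma sum_hc {k : ℕ} {p : P2} (hp : p.totalDegree ≤ k) :
    ∑ m ∈ Finset.range (k + 1), homogeneousComponent m p = p := by
  have h1 : ∑ m ∈ Finset.range (k + 1), homogeneousComponent m p
      = ∑ m ∈ Finset.range (p.totalDegree + 1), homogeneousComponent m p := by
    symm
    apply Finset.sum_subset (Finset.range_subset_range.mpr (by omega))
    intro m _ hm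
    exact homogeneousComponent_eq_zero _ _ (by simp at hm; omega)
  rw [h1, sum_homogeneousComponent]

lemma exist0 (k : ℕ) (v0 v1 : P2) (h0 : v0.totalDegree ≤ k) (h1 : v1.totalDegree ≤ k) :
    ∃ w q : P2, w.totalDegree ≤ k + 1 ∧ q.totalDegree ≤ k - 1 ∧ (k = 0 → q = 0) ∧
      v0 = pderiv 1 w + X 0 * q ∧ v1 = -pderiv 0 w + X 1 * q := by
  choose W Q hW hQ hQ0 hA hB using fun m : ℕ =>
    core m (homogeneousComponent m v0) (homogeneousComponent m v1)
      (homogeneousComponent_isHomogeneous m v0) (homogeneousComponent_isHomogeneous m v1)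
  refine ⟨∑ m ∈ Finset.range (k + 1), W m, ∑ m ∈ Finset.range (k + 1), Q m, ?_, ?_, ?_, ?_, ?_⟩
  · exact totalDegree_finsetSum_le fun m hm =>
      (hW m).totalDegree_le.trans (by simp at hm; omega)
  · exact totalDegree_finsetSum_le fun m hm =>
      (hQ m).totalDegree_le.trans (by simp at hm; omega)
  · rintro rfl
    rw [Finset.sum_range_one, hQ0 0 rfl]
  · rw [map_sum, Finset.mul_sum, ← Finset.sum_add_distrib]
    conv_lhs => rw [← sum_hc h0]
    exact Finset.sum_congr rfl fun m _ => hA m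
  · rw [map_sum, ← Finset.sum_neg_distrib, Finset.mul_sum, ← Finset.sum_add_distrib]
    conv_lhs => rw [← sum_hc h1]
    exact Finset.sum_congr rfl fun m _ => hB m

lemma hc_X_mul_pderiv (n : ℕ) (q : P2) (i : Fin 2) :
    homogeneousComponent n (X i * pderiv i q) = X i * pderiv i (homogeneousComponent n q) := by
  conv_lhs => rw [← sum_hc (le_refl q.totalDegree), map_sum, Finset.mul_sum, map_sum]
  have key : ∀ m, homogeneousComponent n (X i * pderiv i (homogeneousComponent m q))
      = if n = m then X i * pderiv i (homogeneousComponent m q) else 0 :=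
    fun m => homogeneousComponent_of_mem
      ((mem_homogeneousSubmodule _ _).mpr
        (X_mul_pderiv_isHomogeneous (homogeneousComponent_isHomogeneous m q) i))
  simp_rw [key]
  rw [Finset.sum_ite_eq (Finset.range (q.totalDegree + 1)) n
    (fun m => X i * pderiv i (homogeneousComponent m q))]
  split_ifs with h
  · rfl
  · simp only [Finset.mem_range, not_lt] at h
    rw [homogeneousComponent_eq_zero _ _ (by omega), map_zero, mul_zero]

lemma hc_totalDegree_ne_zero {q : P2} (hq : q ≠ 0) :
    homogeneousComponent q.totalDegree q ≠ 0 := by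
  obtain ⟨d, hd, hdeg⟩ := q.support.exists_mem_eq_sup
    (support_nonempty.mpr hq) (fun d => d.sum fun _ e => e)
  have hdd : d.degree = q.totalDegree := by rw [totalDegree, hdeg]; rfl
  intro h0
  have := coeff_homogeneousComponent (σ := Fin 2) (R := ℝ) q.totalDegree q d
  rw [h0, if_pos hdd] at this
  exact (mem_support_iff.mp hd) this.symm

lemma qzero (c0 c1 : ℝ) (q : P2)
    (h : (2 : ℕ) • q + (X 0 - C c0) * pderiv 0 q + (X 1 - C c1) * pderiv 1 q = 0) :
    q = 0 := by
  by_contra hq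
  set n := q.totalDegree with hn
  rcases Nat.eq_zero_or_pos n with h0 | hpos
  · -- q is a constant
    have hqC : q = C (coeff 0 q) := by
      have := sum_hc (p := q) (k := 0) (by omega)
      rw [Finset.sum_range_one, homogeneousComponent_zero] at this
      exact this.symm
    rw [hqC, pderiv_C, pderiv_C, mul_zero, mul_zero, add_zero, add_zero] at h
    have : q = 0 := by
      rw [hqC]
      have : (2 : ℕ) • C (coeff 0 q) = (0 : P2) := h
      simpa [smul_eq_zero] using this
    exact hq this
  · have hH := congrArg (homogeneousComponent n) h
    rw [map_zero, map_add, map_add, map_nsmul] at hH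
    have e0 : homogeneousComponent n ((X 0 - C c0) * pderiv 0 q)
        = X 0 * pderiv 0 (homogeneousComponent n q) := by
      have hz : homogeneousComponent n (pderiv 0 q) = 0 :=
        homogeneousComponent_eq_zero _ _ (by have := totalDegree_pderiv_le q 0; omega)
      rw [sub_mul, map_sub, hc_X_mul_pderiv, homogeneousComponent_C_mul, hz, mul_zero, sub_zero]
    have e1 : homogeneousComponent n ((X 1 - C c1) * pderiv 1 q)
        = X 1 * pderiv 1 (homogeneousComponent n q) := by
      have hz : homogeneousComponent n (pderiv 1 q) = 0 :=
        homogeneousComponent_eq_zero _ _ (by have := totalDegree_pderiv_le q 1; omega)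
      rw [sub_mul, map_sub, hc_X_mul_pderiv, homogeneousComponent_C_mul, hz, mul_zero, sub_zero]
    rw [e0, e1, add_assoc, euler (homogeneousComponent_isHomogeneous n q),
      ← add_nsmul, ← Nat.cast_smul_eq_nsmul ℝ] at hH
    have hcast : ((2 + n : ℕ) : ℝ) ≠ 0 := by positivity
    have : homogeneousComponent n q = 0 := by
      have h2 : (((2 + n : ℕ) : ℝ))⁻¹ • (((2 + n : ℕ) : ℝ) • homogeneousComponent n q)
          = (((2 + n : ℕ) : ℝ))⁻¹ • (0 : P2) := congrArg _ hH
      rw [smul_smul, inv_mul_cancel₀ hcast, one_smul, smul_zero] at h2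
      exact h2
    exact hc_totalDegree_ne_zero hq this

lemma shift_pderiv (c : Fin 2 → ℝ) (i : Fin 2) (p : P2) :
    pderiv i (bind₁ (fun j => X j + C (c j)) p)
      = bind₁ (fun j => X j + C (c j)) (pderiv i p) := by
  induction p using MvPolynomial.induction_on with
  | C a => simp
  | add p q hp hq => simp only [map_add, hp, hq]
  | mul_X p j hp =>
    simp only [map_mul, bind₁_X_right, pderiv_mul, hp, map_add, pderiv_C, add_zero]
    congr 1
    rcases eq_or_ne j i with rfl | hne
    · rw [pderiv_X_self, map_one]
    · rw [pderiv_X_of_ne hne, map_zero]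

lemma shift_cancel (c : Fin 2 → ℝ) (p : P2) :
    bind₁ (fun j => X j + C ((-c) j)) (bind₁ (fun j => X j + C (c j)) p) = p := by
  rw [bind₁_bind₁]
  have : (fun i : Fin 2 => bind₁ (fun j : Fin 2 => X j + C ((-c) j)) (X i + C (c i)))
      = (X : Fin 2 → P2) := by
    funext i
    simp [bind₁_X_right]
  rw [this, bind₁_X_left]
  rfl

lemma shift_totalDegree_le (c : Fin 2 → ℝ) (p : P2) :
    (bind₁ (fun j => X j + C (c j)) p).totalDegree ≤ p.totalDegree := by
  conv_lhs => rw [p.as_sum]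
  rw [map_sum]
  apply totalDegree_finsetSum_le
  intro d hd
  rw [bind₁_monomial]
  refine (totalDegree_mul _ _).trans ?_
  rw [totalDegree_C, zero_add]
  refine (totalDegree_finset_prod _ _).trans ?_
  have hle : ∀ j ∈ d.support, ((X j + C (c j) : P2) ^ d j).totalDegree ≤ d j := by
    intro j _
    refine (totalDegree_pow _ _).trans ?_
    have : (X j + C (c j) : P2).totalDegree ≤ 1 :=
      (totalDegree_add _ _).trans (by simp [totalDegree_X, totalDegree_C])
    calc d j * (X j + C (c j) : P2).totalDegree ≤ d j * 1 := Nat.mul_le_mul_left _ this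
      _ = d j := Nat.mul_one _
  refine (Finset.sum_le_sum hle).trans ?_
  exact le_totalDegree hd

end Stmt8Aux
end

open Stmt8Aux

/-- 2D polynomial Koszul/Helmholtz decomposition:
`ℙ^k(T;ℝ²) = rot ℙ^{k+1}(T) ⊕ (x − x_T)ℙ^{k−1}(T)`, where `rot w = (∂₂w, −∂₁w)`,
with the convention `ℙ^{−1}(T) = {0}` (encoded by `k = 0 → q = 0`). -/
theorem stmt_8
    (k : ℕ) (T : Set (Fin 2 → ℝ)) (hTopen : IsOpen T) (hTbdd : Bornology.IsBounded T)
    (xT : Fin 2 → ℝ) (hxT : xT ∈ T) :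
    (∀ v : Fin 2 → MvPolynomial (Fin 2) ℝ, (∀ i, (v i).totalDegree ≤ k) →
      ∃ w q : MvPolynomial (Fin 2) ℝ,
        w.totalDegree ≤ k + 1 ∧ q.totalDegree ≤ k - 1 ∧ (k = 0 → q = 0) ∧
        v 0 = pderiv (1 : Fin 2) w + (X 0 - C (xT 0)) * q ∧
        v 1 = -pderiv (0 : Fin 2) w + (X 1 - C (xT 1)) * q) ∧
    (∀ w q : MvPolynomial (Fin 2) ℝ,
      w.totalDegree ≤ k + 1 → q.totalDegree ≤ k - 1 → (k = 0 → q = 0) →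
      pderiv (1 : Fin 2) w = (X 0 - C (xT 0)) * q →
      -pderiv (0 : Fin 2) w = (X 1 - C (xT 1)) * q →
      q = 0 ∧ pderiv (1 : Fin 2) w = 0 ∧ pderiv (0 : Fin 2) w = 0) := by
  constructor
  · intro v hv
    set S : MvPolynomial (Fin 2) ℝ →ₐ[ℝ] MvPolynomial (Fin 2) ℝ :=
      bind₁ (fun j => X j + C (xT j)) with hS
    set Sm : MvPolynomial (Fin 2) ℝ →ₐ[ℝ] MvPolynomial (Fin 2) ℝ :=
      bind₁ (fun j => X j + C ((-xT) j)) with hSm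
    obtain ⟨w', q', hw', hq', hq0', hA, hB⟩ :=
      exist0 k (S (v 0)) (S (v 1))
        ((shift_totalDegree_le xT (v 0)).trans (hv 0))
        ((shift_totalDegree_le xT (v 1)).trans (hv 1))
    refine ⟨Sm w', Sm q', (shift_totalDegree_le _ _).trans hw',
      (shift_totalDegree_le _ _).trans hq', fun hk => by rw [hq0' hk, map_zero], ?_, ?_⟩
    · have h := congrArg Sm hA
      rw [shift_cancel] at h
      rw [map_add, map_mul, bind₁_X_right] at h
      rw [h, shift_pderiv]
      congr 2
      simp [sub_eq_add_neg]
    · have h := congrArg Sm hB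
      rw [shift_cancel] at h
      rw [map_add, map_neg, map_mul, bind₁_X_right] at h
      rw [h, shift_pderiv]
      congr 2
      simp [sub_eq_add_neg]
  · intro w q hdw hdq hq0 h1 h2
    have e1 : pderiv (0 : Fin 2) ((X 0 - C (xT 0)) * q)
        = q + (X 0 - C (xT 0)) * pderiv 0 q := by
      rw [pderiv_mul, map_sub, pderiv_X_self, pderiv_C, sub_zero, one_mul]
    have e2 : pderiv (1 : Fin 2) ((X 1 - C (xT 1)) * q)
        = q + (X 1 - C (xT 1)) * pderiv 1 q := by
      rw [pderiv_mul, map_sub, pderiv_X_self, pderiv_C, sub_zero, one_mul]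
    have d01 : pderiv (0 : Fin 2) (pderiv (1 : Fin 2) w)
        = q + (X 0 - C (xT 0)) * pderiv 0 q := by rw [h1, e1]
    have d10 : -(pderiv (1 : Fin 2) (pderiv (0 : Fin 2) w))
        = q + (X 1 - C (xT 1)) * pderiv 1 q := by
      have h := congrArg (pderiv (1 : Fin 2)) h2
      rw [Derivation.map_neg, e2] at h
      exact h
    have key : (2 : ℕ) • q + (X 0 - C (xT 0)) * pderiv 0 q
        + (X 1 - C (xT 1)) * pderiv 1 q = 0 := by
      rw [two_nsmul]
      linear_combination (pderiv_comm' w) - d01 - d10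
    have hqz : q = 0 := qzero _ _ _ key
    refine ⟨hqz, ?_, ?_⟩
    · rw [h1, hqz, mul_zero]
    · have := h2
      rw [hqz, mul_zero] at this
      exact neg_eq_zero.mp this
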